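/- If β is a 2-form in Ω²₂₁, i.e. β_{ab}Φ_{abij} = 2β_{ij}, and β satisfies β_{ab}Φ_{bpqr} = β_{pi}Φ_{iqra} + β_{qi}Φ_{irpa} + β_{ri}Φ_{ipqa}, then β ⋄ Φ = 0, where (β ⋄ Φ)_{ijkl} = β_{ip}Φ_{pjkl} + β_{jp}Φ_{ipkl} + β_{kp}Φ_{ijpl} + β_{lp}Φ_{ijkp}. -/

import Mathlib

open Finset

/-- The diamond operation of a 2-form `β` with the 4-form `Φ`. -/
def diamond (β : Fin 8 → Fin 8 → ℝ) (Φ : Fin 8 → Fin 8 → Fin 8 → Fin 8 → ℝ)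
    (i j k l : Fin 8) : ℝ :=
  ∑ p, (β i p * Φ p j k l + β j p * Φ i p k l + β k p * Φ i j p l + β l p * Φ i j k p)

/-- if `β ∈ Ω²₂₁` satisfies the Lie-algebra identity, then `β ⋄ Φ = 0`. -/
theorem diamond_vanishes_on_omega21
    (Φ : Fin 8 → Fin 8 → Fin 8 → Fin 8 → ℝ)
    (hanti : ∀ i j k l, Φ j i k l = -Φ i j k l ∧ Φ i k j l = -Φ i j k l ∧
      Φ i j l k = -Φ i j k l)
    (β : Fin 8 → Fin 8 → ℝ) (hβanti : ∀ i j, β j i = -β i j)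
    (hβ21 : ∀ i j, ∑ a, ∑ b, β a b * Φ a b i j = 2 * β i j)
    (hLie : ∀ a p q r, ∑ b, β a b * Φ b p q r =
      ∑ i, (β p i * Φ i q r a + β q i * Φ i r p a + β r i * Φ i p q a)) :
    ∀ i j k l, diamond β Φ i j k l = 0 := by
  intro i j k l
  have swap1 : ∀ a b c d, Φ b a c d = -Φ a b c d := fun a b c d => (hanti a b c d).1
  have swap2 : ∀ a b c d, Φ a c b d = -Φ a b c d := fun a b c d => (hanti a b c d).2.1
  have swap3 : ∀ a b c d, Φ a b d c = -Φ a b c d := fun a b c d => (hanti a b c d).2.2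
  have h1 : ∀ p, Φ p k l i = -Φ i p k l := by
    intro p
    rw [swap3 p k i l, swap2 p i k l, swap1 i p k l]; ring
  have h2 : ∀ p, Φ p l j i = -Φ i j p l := by
    intro p
    rw [swap3 p l i j, swap2 p i l j, swap1 i p l j, swap3 i p j l, swap2 i j p l]; ring
  have h3 : ∀ p, Φ p j k i = -Φ i j k p := by
    intro p
    rw [swap3 p j i k, swap2 p i j k, swap1 i p j k, swap2 i j p k, ← swap3 i j p k]; ring
  unfold diamond
  calc (∑ p, (β i p * Φ p j k l + β j p * Φ i p k l + β k p * Φ i j p l + β l p * Φ i j k p))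
      = ∑ p, (β i p * Φ p j k l
          - (β j p * Φ p k l i + β k p * Φ p l j i + β l p * Φ p j k i)) := by
        refine Finset.sum_congr rfl fun p _ => ?_
        rw [h1, h2, h3]; ring
    _ = (∑ p, β i p * Φ p j k l)
          - ∑ p, (β j p * Φ p k l i + β k p * Φ p l j i + β l p * Φ p j k i) :=
        Finset.sum_sub_distrib _ _
    _ = 0 := by rw [hLie i j k l, sub_self]
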